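/- Let 0 < D < 1, F ⊆ {0,…,N−1}, ũ_F ∈ {0,1}^{|F|}, ȳ ∈ {0,1}^N and r ∈ [0,1]^N. Define the successive cancellation encoder output ū = g(ũ_F, ȳ, r) ∈ {0,1}^N recursively by: u_i = ũ_i if i ∈ F, and otherwise u_i = 0 if r_i < l_i/(1+l_i) and u_i = 1 if r_i ≥ l_i/(1+l_i), where l_i = W^{(i)}(ȳ, u₀^{i−1}|0)/W^{(i)}(ȳ, u₀^{i−1}|1). Let ȳ' ∈ {0,1}^N, z̄ = (ȳ ⊕ ȳ')H_n^{−1}, ũ'_F = ũ_F ⊕ z̄_F, and r'_i = r_i if z_i = 0, r'_i = 1 − r_i if z_i = 1. If, with ū = g(ũ_F, ȳ, r), for every i ∈ F^c one has r_i ≠ l_i(ȳ, u₀^{i−1})/(1 + l_i(ȳ, u₀^{i−1})), then g(ũ'_F, ȳ', r') = g(ũ_F, ȳ, r) ⊕ z̄. -/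

import Mathlib

open Finset

noncomputable section

/-- The polarization kernel `G₂ = [[1,0],[1,1]]` over GF(2). -/
def G2 : Matrix (Fin 2) (Fin 2) (ZMod 2) := !![1, 0; 1, 1]

/-- Index identification `Fin 2 × Fin (2^n) ≃ Fin (2^(n+1))`. -/
def finPowEquiv (n : ℕ) : Fin 2 × Fin (2 ^ n) ≃ Fin (2 ^ (n + 1)) :=
  finProdFinEquiv.trans (finCongr (by rw [pow_succ]; ring))

/-- The `n`-fold Kronecker power `G₂^{⊗n}` over GF(2). -/
def kronPow : (n : ℕ) → Matrix (Fin (2 ^ n)) (Fin (2 ^ n)) (ZMod 2)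
  | 0 => 1
  | n + 1 => Matrix.reindex (finPowEquiv n) (finPowEquiv n)
      (Matrix.kroneckerMap (· * ·) G2 (kronPow n))

/-- Reversal of the `n`-bit binary expansion of `i`. -/
def bitRevNat (n i : ℕ) : ℕ :=
  ∑ k ∈ Finset.range n, if Nat.testBit i (n - 1 - k) then 2 ^ k else 0

lemma sum_range_two_pow_lt (n : ℕ) : ∑ k ∈ Finset.range n, 2 ^ k < 2 ^ n := by
  induction n with
  | zero => simp
  | succ m ih => rw [Finset.sum_range_succ, pow_succ]; omega

lemma bitRevNat_lt (n i : ℕ) : bitRevNat n i < 2 ^ n := by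
  have h1 : bitRevNat n i ≤ ∑ k ∈ Finset.range n, 2 ^ k :=
    Finset.sum_le_sum (fun k _ => by split <;> simp)
  have h2 := sum_range_two_pow_lt n
  omega

/-- The bit-reversal permutation matrix `Aₙ`. -/
def bitRevMatrix (n : ℕ) : Matrix (Fin (2 ^ n)) (Fin (2 ^ n)) (ZMod 2) :=
  fun i j => if (j : ℕ) = bitRevNat n (i : ℕ) then 1 else 0

/-- The polar transform matrix `Hₙ = Aₙ G₂^{⊗n}`. -/
def polarH (n : ℕ) : Matrix (Fin (2 ^ n)) (Fin (2 ^ n)) (ZMod 2) :=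
  bitRevMatrix n * kronPow n

/-- BSC(D) transition probability `W(y∣x)`. -/
def bsc (D : ℝ) (y x : ZMod 2) : ℝ := if y = x then 1 - D else D

/-- The polar transform `x̄ = ū Hₙ` of a word `ū`. -/
def polarEnc (n : ℕ) (u : Fin (2 ^ n) → ZMod 2) : Fin (2 ^ n) → ZMod 2 :=
  Matrix.vecMul u (polarH n)

/-- `W^{(i)}(ȳ, u₀^{i−1} ∣ u_i)`; it depends on `u` only through coordinates `≤ i`,
the coordinates `> i` being summed out. -/
def Wi (D : ℝ) (n : ℕ) (y : Fin (2 ^ n) → ZMod 2) (i : Fin (2 ^ n))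
    (u : Fin (2 ^ n) → ZMod 2) : ℝ :=
  ((2 : ℝ) ^ (2 ^ n - 1))⁻¹ *
    ∑ v ∈ Finset.univ.filter (fun v : Fin (2 ^ n) → ZMod 2 => ∀ j, j ≤ i → v j = u j),
      ∏ j, bsc D (y j) (polarEnc n v j)

/-- The posterior `P(u_i ∣ u₀^{i−1}, ȳ)`. -/
def post (D : ℝ) (n : ℕ) (y : Fin (2 ^ n) → ZMod 2) (i : Fin (2 ^ n))
    (u : Fin (2 ^ n) → ZMod 2) : ℝ :=
  Wi D n y i u /
    (Wi D n y i (Function.update u i 0) + Wi D n y i (Function.update u i 1))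

/-- The likelihood ratio `l_i(ȳ, u₀^{i−1}) = W^{(i)}(ȳ,u₀^{i−1}∣0)/W^{(i)}(ȳ,u₀^{i−1}∣1)`;
only the coordinates `< i` of `u` matter. -/
def likelihood (D : ℝ) (n : ℕ) (y : Fin (2 ^ n) → ZMod 2) (i : Fin (2 ^ n))
    (u : Fin (2 ^ n) → ZMod 2) : ℝ :=
  Wi D n y i (Function.update u i 0) / Wi D n y i (Function.update u i 1)

/-- First `k` steps of the successive cancellation encoder with randomized rounding:
coordinates `< k` are decided (frozen coordinates take the value `ut`, the others are `0`
iff `r i < l_i/(1+l_i)`), coordinates `≥ k` are still `0`. -/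
def scEncAux (D : ℝ) (n : ℕ) (F : Finset (Fin (2 ^ n))) (ut y : Fin (2 ^ n) → ZMod 2)
    (r : Fin (2 ^ n) → ℝ) : ℕ → Fin (2 ^ n) → ZMod 2
  | 0 => fun _ => 0
  | k + 1 => fun i =>
      if (i : ℕ) = k then
        if i ∈ F then ut i
        else if r i < likelihood D n y i (scEncAux D n F ut y r k) /
            (1 + likelihood D n y i (scEncAux D n F ut y r k)) then 0 else 1
      else scEncAux D n F ut y r k i

/-- The successive cancellation encoder output `ū = g(ũ_F, ȳ, r̄)`. -/
def scEnc (D : ℝ) (n : ℕ) (F : Finset (Fin (2 ^ n))) (ut y : Fin (2 ^ n) → ZMod 2)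
    (r : Fin (2 ^ n) → ℝ) : Fin (2 ^ n) → ZMod 2 :=
  scEncAux D n F ut y r (2 ^ n)


/-! ### Auxiliary lemmas -/


lemma testBit_sum (f : ℕ → Bool) : ∀ (n j : ℕ),
    (∑ k ∈ Finset.range n, if f k then 2 ^ k else 0).testBit j = (decide (j < n) && f j) := by
  intro n
  induction n with
  | zero => simp
  | succ m ih =>
    intro j
    rw [Finset.sum_range_succ]
    have hle : (∑ k ∈ Finset.range m, if f k then 2 ^ k else 0) ≤ ∑ k ∈ Finset.range m, 2^k :=
      Finset.sum_le_sum (fun k _ => by split <;> simp)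
    have hsumlt : ∑ k ∈ Finset.range m, 2^k < 2^m := by
      clear hle ih; induction m with
      | zero => simp
      | succ p ihp => rw [Finset.sum_range_succ, pow_succ]; omega
    have hlt : (∑ k ∈ Finset.range m, if f k then 2 ^ k else 0) < 2 ^ m := lt_of_le_of_lt hle hsumlt
    by_cases hf : f m
    · simp only [hf, if_true]
      set a := ∑ k ∈ Finset.range m, if f k then 2 ^ k else 0 with ha
      rw [add_comm]
      rcases lt_trichotomy j m with h | h | h
      · rw [Nat.testBit_two_pow_add_gt h, ih]
        simp [h, Nat.lt_succ_of_lt h]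
      · subst h
        rw [Nat.testBit_two_pow_add_eq, Nat.testBit_lt_two_pow hlt]
        simp [hf]
      · have hj : 2^m + a < 2^j := by
          have : 2^(m+1) ≤ 2^j := Nat.pow_le_pow_right (by norm_num) h
          rw [pow_succ] at this; omega
        rw [Nat.testBit_lt_two_pow hj]
        simp; omega
    · simp only [hf, if_false, add_zero, ih]
      replace hf : f m = false := by simpa using hf
      by_cases h : j = m
      · subst h; simp [hf, Nat.testBit_lt_two_pow hlt]
      · have h2 : (decide (j < m) : Bool) = decide (j < m + 1) := by
          simp only [decide_eq_decide]; omega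
        simp [ih, h2]

lemma bitRevNat_testBit (n i k : ℕ) (hk : k < n) :
    (bitRevNat n i).testBit k = i.testBit (n - 1 - k) := by
  rw [bitRevNat, testBit_sum (fun k => Nat.testBit i (n - 1 - k))]
  simp [hk]

lemma bitRevNat_involutive (n i : ℕ) (hi : i < 2 ^ n) :
    bitRevNat n (bitRevNat n i) = i := by
  apply Nat.eq_of_testBit_eq
  intro k
  by_cases hk : k < n
  · rw [bitRevNat_testBit n _ k hk, bitRevNat_testBit n i _ (by omega)]
    congr 1; omega
  · rw [Nat.testBit_lt_two_pow (lt_of_lt_of_le (bitRevNat_lt n _) (Nat.pow_le_pow_right (by norm_num) (by omega))),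
      Nat.testBit_lt_two_pow (lt_of_lt_of_le hi (Nat.pow_le_pow_right (by norm_num) (by omega)))]

lemma bitRevMatrix_mul_self (n : ℕ) : bitRevMatrix n * bitRevMatrix n = 1 := by
  ext i k
  rw [Matrix.mul_apply]
  have hlt : bitRevNat n (i : ℕ) < 2 ^ n := bitRevNat_lt n i
  rw [Finset.sum_eq_single (⟨bitRevNat n (i : ℕ), hlt⟩ : Fin (2 ^ n))]
  · simp only [bitRevMatrix, Matrix.one_apply]
    rw [bitRevNat_involutive n i i.isLt, if_true, one_mul]
    by_cases h : i = k
    · simp [h]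
    · rw [if_neg h, if_neg (fun hh => h (Fin.ext hh.symm))]
  · intro b _ hb
    rw [bitRevMatrix, if_neg, zero_mul]
    intro hh; exact hb (Fin.ext hh)
  · simp

lemma isUnit_det_bitRevMatrix (n : ℕ) : IsUnit (bitRevMatrix n).det := by
  apply IsUnit.of_mul_eq_one (bitRevMatrix n).det
  rw [← Matrix.det_mul, bitRevMatrix_mul_self, Matrix.det_one]

lemma det_kronPow (n : ℕ) : (kronPow n).det = 1 := by
  induction n with
  | zero => simp [kronPow]
  | succ m ih =>
    rw [kronPow]
    rw [Matrix.det_reindex_self, Matrix.det_kronecker, ih]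
    have hG2 : G2.det = 1 := by simp [G2, Matrix.det_fin_two_of]
    rw [hG2]; simp

lemma isUnit_det_polarH (n : ℕ) : IsUnit (polarH n).det := by
  rw [polarH, Matrix.det_mul, det_kronPow, mul_one]
  exact isUnit_det_bitRevMatrix n


lemma vecMul_polarH_of (n : ℕ) (y y' z : Fin (2 ^ n) → ZMod 2)
    (hz : z = Matrix.vecMul (y + y') (polarH n)⁻¹) :
    Matrix.vecMul z (polarH n) = y + y' := by
  subst hz
  rw [Matrix.vecMul_vecMul, Matrix.nonsing_inv_mul _ (isUnit_det_polarH n), Matrix.vecMul_one]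

lemma bsc_pos {D : ℝ} (h0 : 0 < D) (h1 : D < 1) (a b : ZMod 2) : 0 < bsc D a b := by
  rw [bsc]; split <;> linarith

lemma Wi_pos {D : ℝ} (h0 : 0 < D) (h1 : D < 1) (n : ℕ) (y : Fin (2 ^ n) → ZMod 2)
    (i : Fin (2 ^ n)) (u : Fin (2 ^ n) → ZMod 2) : 0 < Wi D n y i u := by
  rw [Wi]
  apply mul_pos (inv_pos.2 (by positivity))
  apply Finset.sum_pos
  · intro v _; exact Finset.prod_pos fun j _ => bsc_pos h0 h1 _ _
  · exact ⟨u, by simp⟩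

lemma Wi_congr (D : ℝ) (n : ℕ) (y : Fin (2 ^ n) → ZMod 2) (i : Fin (2 ^ n))
    {u w : Fin (2 ^ n) → ZMod 2} (h : ∀ j, j ≤ i → u j = w j) :
    Wi D n y i u = Wi D n y i w := by
  rw [Wi, Wi]; congr 2
  ext v; simp only [Finset.mem_filter, Finset.mem_univ, true_and]
  constructor
  · intro hv j hj; rw [hv j hj, ← h j hj]
  · intro hv j hj; rw [hv j hj, h j hj]

lemma zmod2_cases (a : ZMod 2) : a = 0 ∨ a = 1 := by revert a; decide

lemma Wi_shift (D : ℝ) (n : ℕ) (y y' z : Fin (2 ^ n) → ZMod 2)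
    (hzH : Matrix.vecMul z (polarH n) = y + y') (i : Fin (2 ^ n))
    (u : Fin (2 ^ n) → ZMod 2) : Wi D n y' i (u + z) = Wi D n y i u := by
  have key : ∀ w : Fin (2 ^ n) → ZMod 2,
      (∏ j, bsc D (y j) (polarEnc n w j)) = ∏ j, bsc D (y' j) (polarEnc n (w + z) j) := by
    intro w
    apply Finset.prod_congr rfl
    intro j _
    have henc : polarEnc n (w + z) j = polarEnc n w j + (y j + y' j) := by
      rw [polarEnc, polarEnc, Matrix.add_vecMul, hzH]; rfl
    rw [henc, bsc, bsc]
    have hiff : (y j = polarEnc n w j) ↔ (y' j = polarEnc n w j + (y j + y' j)) := by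
      have : ∀ a b c : ZMod 2, (c = b) ↔ (a = b + (c + a)) := by decide
      exact this (y' j) (polarEnc n w j) (y j)
    exact (if_congr hiff rfl rfl)
  rw [Wi, Wi]; congr 1
  refine (Finset.sum_equiv (Equiv.addRight z) ?_ ?_).symm
  · intro v
    simp only [Finset.mem_filter, Finset.mem_univ, true_and, Equiv.coe_addRight]
    constructor
    · intro hv j hj
      show v j + z j = u j + z j
      rw [hv j hj]
    · intro hv j hj
      have := hv j hj
      simpa using congrArg (fun t => t + z j) this
  · intro v hv
    exact key v

lemma update_add {n : ℕ} (u z : Fin (2 ^ n) → ZMod 2) (i : Fin (2 ^ n)) (a : ZMod 2) :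
    Function.update (u + z) i a = Function.update u i (a + z i) + z := by
  funext j
  by_cases h : j = i
  · subst h
    simp only [Function.update_self, Pi.add_apply, Function.update_self]
    have : ∀ b c : ZMod 2, b = b + c + c := by decide
    exact this a (z j)
  · simp [Function.update_of_ne h]

lemma likelihood_congr (D : ℝ) (n : ℕ) (y : Fin (2 ^ n) → ZMod 2) (i : Fin (2 ^ n))
    {u w : Fin (2 ^ n) → ZMod 2} (h : ∀ j, j < i → u j = w j) :
    likelihood D n y i u = likelihood D n y i w := by
  have haux : ∀ a : ZMod 2, ∀ j, j ≤ i →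
      Function.update u i a j = Function.update w i a j := by
    intro a j hj
    by_cases hji : j = i
    · subst hji; simp
    · rw [Function.update_of_ne hji, Function.update_of_ne hji]
      exact h j (lt_of_le_of_ne hj hji)
  rw [likelihood, likelihood, Wi_congr D n y i (haux 0), Wi_congr D n y i (haux 1)]

lemma likelihood_shift (D : ℝ) (n : ℕ) (y y' z : Fin (2 ^ n) → ZMod 2)
    (hzH : Matrix.vecMul z (polarH n) = y + y') (i : Fin (2 ^ n))
    (u : Fin (2 ^ n) → ZMod 2) :
    likelihood D n y' i (u + z) =
      if z i = 0 then likelihood D n y i u else (likelihood D n y i u)⁻¹ := by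
  rw [likelihood, likelihood, update_add, update_add,
    Wi_shift D n y y' z hzH i, Wi_shift D n y y' z hzH i]
  rcases zmod2_cases (z i) with hzi | hzi
  · rw [hzi, if_pos rfl, add_zero, add_zero]
  · rw [hzi, if_neg (by decide : (1 : ZMod 2) ≠ 0)]
    have h01 : (0 : ZMod 2) + 1 = 1 := by decide
    have h11 : (1 : ZMod 2) + 1 = 0 := by decide
    rw [h01, h11, inv_div]

lemma scEncAux_stable (D : ℝ) (n : ℕ) (F : Finset (Fin (2 ^ n)))
    (ut y : Fin (2 ^ n) → ZMod 2) (r : Fin (2 ^ n) → ℝ) :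
    ∀ m k, k ≤ m → ∀ i : Fin (2 ^ n), (i : ℕ) < k →
      scEncAux D n F ut y r m i = scEncAux D n F ut y r k i := by
  intro m
  induction m with
  | zero => intro k hk i hi; omega
  | succ p ih =>
    intro k hk i hi
    by_cases h : k = p + 1
    · subst h; rfl
    · have hkp : k ≤ p := by omega
      have hip : ¬ (i : ℕ) = p := by omega
      simp only [scEncAux, if_neg hip]
      exact ih k hkp i hi

lemma flip_lt (l r : ℝ) (hl : 0 < l) (hne : r ≠ l / (1 + l)) :
    (1 - r < l⁻¹ / (1 + l⁻¹)) ↔ ¬ (r < l / (1 + l)) := by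
  have h1 : (0 : ℝ) < 1 + l := by linarith
  have h2 : l⁻¹ / (1 + l⁻¹) = 1 / (1 + l) := by
    rw [div_eq_div_iff (by positivity) (ne_of_gt h1)]
    field_simp
    ring
  have ht : l / (1 + l) + 1 / (1 + l) = 1 := by field_simp; ring
  rw [h2, not_lt]
  constructor
  · intro h; linarith
  · intro h
    have : l / (1 + l) < r := lt_of_le_of_ne h (fun hh => hne hh.symm)
    linarith

/-- **Coupled randomized rounding is equivariant.**  With `z̄ = (ȳ ⊕ ȳ′)Hₙ⁻¹`,
`ũ′_F = ũ_F ⊕ z̄_F` and the coupled randomness `r′_i = r_i` if `z_i = 0`,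
`r′_i = 1 − r_i` if `z_i = 1`, and provided no non-frozen decision hits the rounding
threshold exactly, `g(ũ′_F, ȳ′, r̄′) = g(ũ_F, ȳ, r̄) ⊕ z̄`. -/
theorem scEnc_equivariant (D : ℝ) (hD0 : 0 < D) (hD1 : D < 1) (n : ℕ)
    (F : Finset (Fin (2 ^ n))) (ut y y' ut' z : Fin (2 ^ n) → ZMod 2)
    (r r' : Fin (2 ^ n) → ℝ)
    (hz : z = Matrix.vecMul (y + y') (polarH n)⁻¹)
    (hut' : ∀ i ∈ F, ut' i = ut i + z i)
    (hr' : ∀ i, r' i = if z i = 0 then r i else 1 - r i)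
    (hthr : ∀ i ∉ F,
      r i ≠ likelihood D n y i (scEnc D n F ut y r) /
        (1 + likelihood D n y i (scEnc D n F ut y r))) :
    scEnc D n F ut' y' r' = scEnc D n F ut y r + z := by
  have hzH : Matrix.vecMul z (polarH n) = y + y' := vecMul_polarH_of n y y' z hz
  have key : ∀ k, ∀ i : Fin (2 ^ n),
      scEncAux D n F ut' y' r' k i =
        scEncAux D n F ut y r k i + (if (i : ℕ) < k then z i else 0) := by
    intro k
    induction k with
    | zero => intro i; simp [scEncAux]
    | succ p ih =>
      intro i
      simp only [scEncAux]
      by_cases hip : (i : ℕ) = p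
      · rw [if_pos hip, if_pos hip, if_pos (show (i : ℕ) < p + 1 by omega)]
        by_cases hiF : i ∈ F
        · rw [if_pos hiF, if_pos hiF, hut' i hiF]
        · rw [if_neg hiF, if_neg hiF]
          set u := scEncAux D n F ut y r p with hu
          set u' := scEncAux D n F ut' y' r' p with hu'
          have hL' : likelihood D n y' i u' = likelihood D n y' i (u + z) := by
            apply likelihood_congr
            intro j hj
            have hjp : (j : ℕ) < p := by
              have := hj; rw [Fin.lt_def] at this; omega
            rw [ih j, if_pos hjp]; rfl
          have hEq : likelihood D n y i u = likelihood D n y i (scEnc D n F ut y r) := by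
            apply likelihood_congr
            intro j hj
            have hjp : (j : ℕ) < p := by
              have := hj; rw [Fin.lt_def] at this; omega
            rw [scEnc, scEncAux_stable D n F ut y r (2 ^ n) p (by omega) j hjp, hu]
          have hthr' : r i ≠ likelihood D n y i u / (1 + likelihood D n y i u) := by
            rw [hEq]; exact hthr i hiF
          have hlpos : 0 < likelihood D n y i u :=
            div_pos (Wi_pos hD0 hD1 n y i _) (Wi_pos hD0 hD1 n y i _)
          rw [hL', likelihood_shift D n y y' z hzH i u, hr' i]
          rcases zmod2_cases (z i) with hzi | hzi
          · rw [hzi, if_pos rfl, if_pos rfl, add_zero]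
          · have hne10 : (1 : ZMod 2) ≠ 0 := by decide
            rw [hzi, if_neg hne10, if_neg hne10]
            have hflip := flip_lt (likelihood D n y i u) (r i) hlpos hthr'
            by_cases hr : r i < likelihood D n y i u / (1 + likelihood D n y i u)
            · rw [if_pos hr, if_neg (fun hh => hflip.mp hh hr)]
              decide
            · rw [if_neg hr, if_pos (hflip.mpr hr)]
              decide
      · rw [if_neg hip, if_neg hip, ih i]
        congr 1
        by_cases h : (i : ℕ) < p
        · rw [if_pos h, if_pos (by omega)]
        · rw [if_neg h, if_neg (by omega)]
  funext i
  rw [scEnc, scEnc, key (2 ^ n) i, if_pos i.isLt]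
  rfl

end
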